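/- Let n ≥ 1 and let β_1,…,β_n be elements of a commutative ring. Then T(β_1,…,β_n) = ∑_{σ ∈ E_n} ∏_{i : σ(i) = i} β_i, where the sum is over all permutations σ of {1,…,n} that are products of disjoint transpositions of the form (l, l+1) (including the identity permutation), and the product is over the fixed points of σ. -/

import Mathlib

open Matrix BigOperators
open scoped Classical

/-- The `n × n` tridiagonal matrix with diagonal `β 0, …, β (n-1)`, superdiagonal entries `-1`
and subdiagonal entries `1`; `T(β_1,…,β_n)` in the paper is its determinant. -/
def triT {n : ℕ} {R : Type*} [CommRing R] (β : Fin n → R) : Matrix (Fin n) (Fin n) R :=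
  Matrix.of fun i j =>
    if i = j then β i
    else if i.val + 1 = j.val then -1
    else if j.val + 1 = i.val then 1
    else 0

/-- The e-transposition `(l, l+1)` (0-indexed: it swaps positions `l` and `l+1`). -/
def eTrans {n : ℕ} (l : ℕ) (h : l + 1 < n) : Equiv.Perm (Fin n) :=
  Equiv.swap ⟨l, Nat.lt_of_succ_lt h⟩ ⟨l + 1, h⟩

/-- `σ ∈ E_n`: `σ` is a product of pairwise disjoint e-transpositions (the empty product
being the identity permutation). -/
def IsEProd {n : ℕ} (σ : Equiv.Perm (Fin n)) : Prop :=
  ∃ L : List {l : ℕ // l + 1 < n},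
    L.Pairwise (fun a b => a.val ≠ b.val ∧ a.val + 1 ≠ b.val ∧ b.val + 1 ≠ a.val) ∧
      σ = (L.map fun l => eTrans l.1 l.2).prod

section Aux

variable {n : ℕ}

lemma eProd_fix (L : List {l : ℕ // l + 1 < n}) (x : Fin n)
    (hx : ∀ l ∈ L, x.val ≠ l.val ∧ x.val ≠ l.val + 1) :
    (L.map fun l => eTrans l.1 l.2).prod x = x := by
  induction L with
  | nil => simp
  | cons a L ih =>
    simp only [List.map_cons, List.prod_cons, Equiv.Perm.mul_apply]
    rw [ih (fun l hl => hx l (List.mem_cons_of_mem _ hl))]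
    have h := hx a (List.mem_cons_self)
    exact Equiv.swap_apply_of_ne_of_ne (Fin.ne_of_val_ne h.1) (Fin.ne_of_val_ne h.2)

lemma eProd_swap (L : List {l : ℕ // l + 1 < n})
    (hL : L.Pairwise fun a b => a.val ≠ b.val ∧ a.val + 1 ≠ b.val ∧ b.val + 1 ≠ a.val)
    (l : {l : ℕ // l + 1 < n}) (hl : l ∈ L) :
    (L.map fun l => eTrans l.1 l.2).prod ⟨l.val, Nat.lt_of_succ_lt l.2⟩ = ⟨l.val + 1, l.2⟩ ∧
      (L.map fun l => eTrans l.1 l.2).prod ⟨l.val + 1, l.2⟩ = ⟨l.val, Nat.lt_of_succ_lt l.2⟩ := by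
  induction L with
  | nil => cases hl
  | cons a L ih =>
    simp only [List.map_cons, List.prod_cons, Equiv.Perm.mul_apply]
    rcases List.mem_cons.mp hl with rfl | hl'
    · have hrel := (List.pairwise_cons.mp hL).1
      have h1 : (L.map fun l => eTrans l.1 l.2).prod ⟨l.val, Nat.lt_of_succ_lt l.2⟩ =
          ⟨l.val, Nat.lt_of_succ_lt l.2⟩ := by
        apply eProd_fix
        intro b hb
        obtain ⟨hb1, hb2, hb3⟩ := hrel b hb
        exact ⟨hb1, fun h => hb3 h.symm⟩
      have h2 : (L.map fun l => eTrans l.1 l.2).prod ⟨l.val + 1, l.2⟩ = ⟨l.val + 1, l.2⟩ := by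
        apply eProd_fix
        intro b hb
        obtain ⟨hb1, hb2, hb3⟩ := hrel b hb
        exact ⟨hb2, fun h => hb1 (Nat.succ_injective h)⟩
      rw [h1, h2]
      unfold eTrans
      exact ⟨Equiv.swap_apply_left _ _, Equiv.swap_apply_right _ _⟩
    · obtain ⟨ih1, ih2⟩ := ih (List.pairwise_cons.mp hL).2 hl'
      rw [ih1, ih2]
      obtain ⟨hb1, hb2, hb3⟩ := (List.pairwise_cons.mp hL).1 l hl'
      unfold eTrans
      constructor
      · exact Equiv.swap_apply_of_ne_of_ne
          (Fin.ne_of_val_ne hb3)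
          (Fin.ne_of_val_ne fun h => hb1 (Nat.succ_injective h).symm)
      · exact Equiv.swap_apply_of_ne_of_ne
          (Fin.ne_of_val_ne fun h => hb1 h.symm)
          (Fin.ne_of_val_ne fun h => hb2 h.symm)

lemma eProd_sign (L : List {l : ℕ // l + 1 < n}) :
    Equiv.Perm.sign (L.map fun l => eTrans l.1 l.2).prod = (-1) ^ L.length := by
  induction L with
  | nil => simp
  | cons a L ih =>
    simp only [List.map_cons, List.prod_cons, Equiv.Perm.sign_mul, ih, List.length_cons]
    have : Equiv.Perm.sign (eTrans a.1 a.2) = -1 := by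
      unfold eTrans
      exact Equiv.Perm.sign_swap (Fin.ne_of_val_ne (Nat.ne_of_lt (Nat.lt_succ_self _)))
    rw [this, pow_succ, mul_comm]

/-- A permutation moving every point by at most one step is a product of disjoint
e-transpositions. -/
lemma isEProd_of_adj : ∀ (m : ℕ) (σ : Equiv.Perm (Fin n)),
    (Finset.univ.filter fun i => σ i ≠ i).card ≤ m →
    (∀ i, σ i = i ∨ (σ i).val + 1 = i.val ∨ i.val + 1 = (σ i).val) → IsEProd σ := by
  intro m
  induction m with
  | zero =>
    intro σ hc _
    have hS : (Finset.univ.filter fun i => σ i ≠ i) = ∅ :=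
      Finset.card_eq_zero.mp (Nat.le_zero.mp hc)
    have : σ = 1 := by
      ext x
      by_contra hx
      have : x ∈ (Finset.univ.filter fun i => σ i ≠ i) := by
        simp only [Finset.mem_filter, Finset.mem_univ, true_and]
        exact fun h => hx (by simpa using congrArg Fin.val h)
      rw [hS] at this
      exact absurd this (Finset.notMem_empty x)
    exact ⟨[], List.Pairwise.nil, by simp [this]⟩
  | succ m ih =>
    intro σ hc h
    set S := Finset.univ.filter fun i => σ i ≠ i with hSdef
    by_cases hne : S.Nonempty
    case neg =>
      exact ih σ (by
        rw [← hSdef, Finset.not_nonempty_iff_eq_empty.mp hne]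
        simp) h
    case pos =>
      set i := S.min' hne with hidef
      have hiS : i ∈ S := S.min'_mem hne
      have hi : σ i ≠ i := (Finset.mem_filter.mp hiS).2
      have himin : ∀ j ∈ S, i ≤ j := fun j hj => S.min'_le j hj
      -- σ i = i + 1
      have hup : (σ i).val = i.val + 1 := by
        rcases h i with h0 | h0 | h0
        · exact absurd h0 hi
        · exfalso
          have hmem : σ i ∈ S := by
            simp only [hSdef, Finset.mem_filter, Finset.mem_univ, true_and]
            intro he
            exact hi (σ.injective he)
          have := himin _ hmem
          have : i.val ≤ (σ i).val := this
          omega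
        · omega
      have hlt : i.val + 1 < n := hup ▸ (σ i).isLt
      set k : Fin n := ⟨i.val + 1, hlt⟩ with hkdef
      have hik : i ≠ k := Fin.ne_of_val_ne (show i.val ≠ i.val + 1 by omega)
      have hσi : σ i = k := Fin.ext hup
      have hσk : σ k = i := by
        have hji : σ (σ.symm i) = i := σ.apply_symm_apply i
        rcases h (σ.symm i) with h0 | h0 | h0
        · exfalso
          have hj : σ.symm i = i := h0.symm.trans hji
          exact hi ((congrArg (⇑σ) hj.symm).trans hji)
        · rw [hji] at h0
          have : σ.symm i = k := Fin.ext (by omega)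
          rw [← this, hji]
        · exfalso
          rw [hji] at h0
          have hmem : σ.symm i ∈ S := by
            simp only [hSdef, Finset.mem_filter, Finset.mem_univ, true_and]
            intro he
            have hj : σ.symm i = i := he.symm.trans hji
            exact hi ((congrArg (⇑σ) hj.symm).trans hji)
          have : i.val ≤ (σ.symm i).val := himin _ hmem
          omega
      have hei : (⟨i.val, Nat.lt_of_succ_lt hlt⟩ : Fin n) = i := Fin.ext rfl
      set τ := eTrans i.val hlt with hτdef
      have hτi : τ i = k := by rw [hτdef]; unfold eTrans; rw [hei]; exact Equiv.swap_apply_left _ _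
      have hτk : τ k = i := by
        rw [hτdef]; unfold eTrans; rw [hei]; exact Equiv.swap_apply_right _ _
      have hτo : ∀ x : Fin n, x ≠ i → x ≠ k → τ x = x := by
        intro x hx1 hx2
        rw [hτdef]; unfold eTrans; rw [hei]
        exact Equiv.swap_apply_of_ne_of_ne hx1 hx2
      set σ' := σ * τ with hσ'def
      have e1 : σ' i = i := by
        rw [hσ'def]; simp only [Equiv.Perm.mul_apply]; rw [hτi, hσk]
      have e2 : σ' k = k := by
        rw [hσ'def]; simp only [Equiv.Perm.mul_apply]; rw [hτk, hσi]
      have eo : ∀ x : Fin n, x ≠ i → x ≠ k → σ' x = σ x := by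
        intro x hx1 hx2
        rw [hσ'def]; simp only [Equiv.Perm.mul_apply]; rw [hτo x hx1 hx2]
      -- σ' satisfies the hypothesis
      have h' : ∀ x, σ' x = x ∨ (σ' x).val + 1 = x.val ∨ x.val + 1 = (σ' x).val := by
        intro x
        by_cases hx1 : x = i
        · left; rw [hx1, e1]
        by_cases hx2 : x = k
        · left; rw [hx2, e2]
        rw [eo x hx1 hx2]
        exact h x
      -- support of σ' is smaller
      have hsub : (Finset.univ.filter fun x => σ' x ≠ x) ⊆ S.erase i := by
        intro x hx
        simp only [Finset.mem_filter, Finset.mem_univ, true_and] at hx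
        have hx1 : x ≠ i := fun he => hx (he ▸ e1)
        have hx2 : x ≠ k := fun he => hx (he ▸ e2)
        rw [Finset.mem_erase]
        refine ⟨hx1, ?_⟩
        simp only [hSdef, Finset.mem_filter, Finset.mem_univ, true_and]
        rw [← eo x hx1 hx2]
        exact hx
      have hc' : (Finset.univ.filter fun x => σ' x ≠ x).card ≤ m := by
        have h1 := Finset.card_le_card hsub
        have h2 := Finset.card_erase_of_mem hiS
        omega
      obtain ⟨L, hLp, hLeq⟩ := ih σ' hc' h'
      -- the new list
      refine ⟨⟨i.val, hlt⟩ :: L, ?_, ?_⟩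
      · rw [List.pairwise_cons]
        refine ⟨?_, hLp⟩
        intro b hb
        have hm := eProd_swap L hLp b hb
        rw [← hLeq] at hm
        have hmb1 : σ' ⟨b.val, Nat.lt_of_succ_lt b.2⟩ ≠ ⟨b.val, Nat.lt_of_succ_lt b.2⟩ := by
          rw [hm.1]; exact Fin.ne_of_val_ne (show b.val + 1 ≠ b.val by omega)
        have hmb2 : σ' ⟨b.val + 1, b.2⟩ ≠ ⟨b.val + 1, b.2⟩ := by
          rw [hm.2]; exact Fin.ne_of_val_ne (show b.val ≠ b.val + 1 by omega)
        refine ⟨?_, ?_, ?_⟩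
        · intro he
          have he' : i.val = b.val := he
          apply hmb1
          have : (⟨b.val, Nat.lt_of_succ_lt b.2⟩ : Fin n) = i :=
            Fin.ext (show b.val = i.val by omega)
          rw [this, e1]
        · intro he
          have he' : i.val + 1 = b.val := he
          apply hmb1
          have : (⟨b.val, Nat.lt_of_succ_lt b.2⟩ : Fin n) = k := by
            apply Fin.ext
            show b.val = i.val + 1
            omega
          rw [this, e2]
        · intro he
          have he' : b.val + 1 = i.val := he
          apply hmb2
          have : (⟨b.val + 1, b.2⟩ : Fin n) = i :=
            Fin.ext (show b.val + 1 = i.val by omega)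
          rw [this, e1]
      · -- σ = τ * σ'
        simp only [List.map_cons, List.prod_cons, ← hLeq, ← hτdef]
        ext x
        simp only [Equiv.Perm.mul_apply]
        by_cases hx1 : x = i
        · rw [hx1, e1, hσi, hτi]
        by_cases hx2 : x = k
        · rw [hx2, e2, hσk, hτk]
        rw [eo x hx1 hx2]
        have hσx1 : σ x ≠ k := fun he => hx1 (σ.injective (he.trans hσi.symm))
        have hσx2 : σ x ≠ i := fun he => hx2 (σ.injective (he.trans hσk.symm))
        exact congrArg Fin.val (hτo _ hσx2 hσx1).symm

lemma triT_entry_sub {R : Type*} [CommRing R] (β : Fin n → R) (a b : Fin n)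
    (h : b.val + 1 = a.val) : triT β a b = 1 := by
  simp only [triT, Matrix.of_apply]
  rw [if_neg (Fin.ne_of_val_ne (by omega)), if_neg (by omega), if_pos h]

lemma triT_entry_super {R : Type*} [CommRing R] (β : Fin n → R) (a b : Fin n)
    (h : a.val + 1 = b.val) : triT β a b = -1 := by
  simp only [triT, Matrix.of_apply]
  rw [if_neg (Fin.ne_of_val_ne (by omega)), if_pos h]

end Aux

/-- the tridiagonal determinant `T(β_1,…,β_n)` equals
`∑_{σ ∈ E_n} ∏_{i : σ(i) = i} β_i`. -/
theorem stmt16 (n : ℕ) (hn : 1 ≤ n) {R : Type*} [CommRing R] (β : Fin n → R) :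
    (triT β).det =
      ∑ σ ∈ Finset.univ.filter (fun σ : Equiv.Perm (Fin n) => IsEProd σ),
        ∏ i ∈ Finset.univ.filter (fun i : Fin n => σ i = i), β i := by
  rw [Matrix.det_apply]
  rw [← Finset.sum_filter_add_sum_filter_not Finset.univ (fun σ : Equiv.Perm (Fin n) => IsEProd σ)]
  have hzero : ∑ σ ∈ Finset.univ.filter
      (fun σ : Equiv.Perm (Fin n) => ¬ IsEProd σ),
      Equiv.Perm.sign σ • ∏ i, triT β (σ i) i = 0 := by
    apply Finset.sum_eq_zero
    intro σ hσ
    simp only [Finset.mem_filter, Finset.mem_univ, true_and] at hσ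
    have : ¬ (∀ i, σ i = i ∨ (σ i).val + 1 = i.val ∨ i.val + 1 = (σ i).val) := by
      intro hadj
      exact hσ (isEProd_of_adj _ σ le_rfl hadj)
    push_neg at this
    obtain ⟨i, hi1, hi2, hi3⟩ := this
    have hzero_entry : triT β (σ i) i = 0 := by
      simp only [triT, Matrix.of_apply]
      rw [if_neg hi1, if_neg hi2, if_neg hi3]
    have : ∏ j : Fin n, triT β (σ j) j = 0 :=
      Finset.prod_eq_zero (Finset.mem_univ i) hzero_entry
    rw [this, smul_zero]
  rw [hzero, add_zero]
  apply Finset.sum_congr rfl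
  intro σ hσ
  simp only [Finset.mem_filter, Finset.mem_univ, true_and] at hσ
  obtain ⟨L, hLp, hLeq⟩ := hσ
  have hsym : Symmetric (fun a b : {l : ℕ // l + 1 < n} =>
      a.val ≠ b.val ∧ a.val + 1 ≠ b.val ∧ b.val + 1 ≠ a.val) := by
    intro a b h
    exact ⟨h.1.symm, h.2.2, h.2.1⟩
  have hforall := by
    haveI : Std.Symm (fun a b : {l : ℕ // l + 1 < n} =>
        a.val ≠ b.val ∧ a.val + 1 ≠ b.val ∧ b.val + 1 ≠ a.val) := ⟨fun _ _ h => hsym h⟩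
    exact hLp.forall
  have hnodup : L.Nodup := hLp.imp (fun h => fun he => h.1 (congrArg Subtype.val he))
  -- the product over all i splits into fixed and moved points
  rw [← Finset.prod_filter_mul_prod_filter_not Finset.univ (fun i : Fin n => σ i = i)
    (fun i => triT β (σ i) i)]
  have hfixed : ∏ i ∈ Finset.univ.filter (fun i : Fin n => σ i = i), triT β (σ i) i =
      ∏ i ∈ Finset.univ.filter (fun i : Fin n => σ i = i), β i := by
    apply Finset.prod_congr rfl
    intro x hx
    simp only [Finset.mem_filter, Finset.mem_univ, true_and] at hx
    rw [hx]
    simp [triT]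
  rw [hfixed]
  -- the moved points are the union of the pairs
  have hmoved : Finset.univ.filter (fun i : Fin n => ¬ σ i = i) =
      L.toFinset.biUnion (fun l =>
        {(⟨l.val, Nat.lt_of_succ_lt l.2⟩ : Fin n), ⟨l.val + 1, l.2⟩}) := by
    ext x
    simp only [Finset.mem_filter, Finset.mem_univ, true_and, Finset.mem_biUnion,
      List.mem_toFinset, Finset.mem_insert, Finset.mem_singleton]
    constructor
    · intro hx
      by_contra hcon
      push_neg at hcon
      apply hx
      rw [hLeq]
      apply eProd_fix
      intro l hl
      obtain ⟨h1, h2⟩ := hcon l hl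
      exact ⟨fun he => h1 (Fin.ext he), fun he => h2 (Fin.ext he)⟩
    · rintro ⟨l, hl, rfl | rfl⟩
      · rw [hLeq, (eProd_swap L hLp l hl).1]
        exact Fin.ne_of_val_ne (show l.val + 1 ≠ l.val by omega)
      · rw [hLeq, (eProd_swap L hLp l hl).2]
        exact Fin.ne_of_val_ne (show l.val ≠ l.val + 1 by omega)
  rw [hmoved]
  have hdisj : ∀ a ∈ L.toFinset, ∀ b ∈ L.toFinset, a ≠ b →
      Disjoint ({(⟨a.val, Nat.lt_of_succ_lt a.2⟩ : Fin n), ⟨a.val + 1, a.2⟩} : Finset (Fin n))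
        {(⟨b.val, Nat.lt_of_succ_lt b.2⟩ : Fin n), ⟨b.val + 1, b.2⟩} := by
    intro a ha b hb hab
    obtain ⟨h1, h2, h3⟩ := hforall (List.mem_toFinset.mp ha) (List.mem_toFinset.mp hb) hab
    rw [Finset.disjoint_left]
    intro x hx1 hx2
    simp only [Finset.mem_insert, Finset.mem_singleton, Fin.ext_iff] at hx1 hx2
    omega
  rw [Finset.prod_biUnion hdisj]
  have hpair : ∀ l ∈ L.toFinset,
      ∏ i ∈ ({(⟨l.val, Nat.lt_of_succ_lt l.2⟩ : Fin n), ⟨l.val + 1, l.2⟩} : Finset (Fin n)),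
        triT β (σ i) i = -1 := by
    intro l hl
    have hne : (⟨l.val, Nat.lt_of_succ_lt l.2⟩ : Fin n) ≠ ⟨l.val + 1, l.2⟩ :=
      Fin.ne_of_val_ne (show l.val ≠ l.val + 1 by omega)
    rw [Finset.prod_pair hne]
    have hm := eProd_swap L hLp l (List.mem_toFinset.mp hl)
    rw [← hLeq] at hm
    rw [hm.1, hm.2]
    have h1 : triT β ⟨l.val + 1, l.2⟩ ⟨l.val, Nat.lt_of_succ_lt l.2⟩ = 1 :=
      triT_entry_sub β _ _ (show l.val + 1 = l.val + 1 from rfl)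
    have h2 : triT β ⟨l.val, Nat.lt_of_succ_lt l.2⟩ ⟨l.val + 1, l.2⟩ = -1 :=
      triT_entry_super β _ _ (show l.val + 1 = l.val + 1 from rfl)
    rw [h1, h2]
    ring
  rw [Finset.prod_congr rfl hpair, Finset.prod_const]
  have hcard : L.toFinset.card = L.length := List.toFinset_card_of_nodup hnodup
  rw [hcard]
  have hsign : Equiv.Perm.sign σ = (-1) ^ L.length := by rw [hLeq]; exact eProd_sign L
  rw [hsign]
  rw [Units.smul_def, zsmul_eq_mul]
  push_cast
  rw [mul_comm (∏ i ∈ Finset.univ.filter (fun i : Fin n => σ i = i), β i),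
    ← mul_assoc, ← mul_pow, neg_mul_neg, mul_one, one_pow, one_mul]
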